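/- Let I ⊆ ℝ be an open interval and let u, a, b, c, d : I → ℝ be differentiable functions with u > 0, a > 0, b > 0 and d < 0 on I, satisfying the integrability conditions (u + d)² = a² + c² and d² = b² + c² on I, together with the equations u' = −(u + 2d)², (u·c)' = 0 and (a·b)' = 0. Set v = u + 2d. Then on I: a² − b² = u·v, and the equations u·a' = −a(a² − b²), u·b' = b(a² − b²), u·v' = v³ − 2v(a² + b²), and u·d' = v² d − 2 v b² all hold. -/

import Mathlib

open Set Filter Topology

lemma aux_no_isolated {s t : ℝ} {F F' μ : ℝ → ℝ}
    (hF : ∀ τ ∈ Set.Ioo s t, HasDerivAt F (F' τ) τ)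
    (hμ : ContinuousOn μ (Set.Ioo s t))
    (hode : ∀ τ ∈ Set.Ioo s t, F τ ≠ 0 → F' τ = -(μ τ * F τ))
    {τ₀ : ℝ} (hτ₀ : τ₀ ∈ Set.Ioo s t) (h0 : F τ₀ = 0) : F' τ₀ = 0 := by
  by_contra hne
  set M : ℝ := |μ τ₀| + 1 with hM
  -- eventually, points near τ₀ (other than τ₀) have F ≠ 0
  have h1 : ∀ᶠ τ in 𝓝[≠] τ₀, slope F τ₀ τ ≠ 0 :=
    (hasDerivAt_iff_tendsto_slope.mp (hF τ₀ hτ₀)).eventually_ne hne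
  have h2 : ∀ᶠ τ in 𝓝 τ₀, |μ τ| < M := by
    have hc : ContinuousAt μ τ₀ :=
      (hμ τ₀ hτ₀).continuousAt (Ioo_mem_nhds hτ₀.1 hτ₀.2)
    have habs : ContinuousAt (fun τ => |μ τ|) τ₀ := hc.abs
    exact habs.eventually_lt_const (by simp [hM])
  have h3 : ∀ᶠ τ in 𝓝 τ₀, τ ∈ Set.Ioo s t := isOpen_Ioo.eventually_mem hτ₀
  have hall : ∀ᶠ τ in 𝓝[>] τ₀, F τ ≠ 0 ∧ τ ∈ Set.Ioo s t ∧ |μ τ| < M := by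
    have h1' : ∀ᶠ τ in 𝓝[>] τ₀, slope F τ₀ τ ≠ 0 :=
      h1.filter_mono (nhdsWithin_mono τ₀ (fun x hx => ne_of_gt hx))
    filter_upwards [h1', h2.filter_mono nhdsWithin_le_nhds,
      h3.filter_mono nhdsWithin_le_nhds] with τ hs hb hI
    refine ⟨fun hFτ => hs ?_, hI, hb⟩
    simp [slope, hFτ, h0]
  obtain ⟨e, he, hsub⟩ := mem_nhdsGT_iff_exists_Ioo_subset.mp hall
  set m : ℝ := (τ₀ + e) / 2 with hm
  have hm1 : τ₀ < m := by simp only [hm]; simp only [Set.mem_Ioi] at he; linarith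
  have hm2 : m < e := by simp only [hm]; simp only [Set.mem_Ioi] at he; linarith
  have hIm : Set.Icc τ₀ m ⊆ Set.Ioo s t := by
    intro x hx
    rcases hx.1.eq_or_lt with rfl | hlt
    · exact hτ₀
    · exact (hsub ⟨hlt, lt_of_le_of_lt hx.2 hm2⟩).2.1
  set h : ℝ → ℝ := fun τ => F τ * F τ * Real.exp (-(2 * M) * τ) with hdefh
  have hcont : ContinuousOn h (Set.Icc τ₀ m) := by
    have hFc : ContinuousOn F (Set.Icc τ₀ m) := fun x hx =>
      ((hF x (hIm hx)).continuousAt).continuousWithinAt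
    exact (hFc.mul hFc).mul ((Real.continuous_exp.comp (continuous_const.mul continuous_id)).continuousOn)
  have hderiv : ∀ x ∈ Set.Ioo τ₀ m,
      HasDerivAt h ((F' x * F x + F x * F' x + F x * F x * (-(2 * M))) * Real.exp (-(2 * M) * x)) x := by
    intro x hx
    have hx' : x ∈ Set.Ioo τ₀ e := ⟨hx.1, lt_trans hx.2 hm2⟩
    have hFx := hF x ((hsub hx').2.1)
    have hexp : HasDerivAt (fun τ => Real.exp (-(2 * M) * τ)) (Real.exp (-(2 * M) * x) * (-(2 * M))) x := by
      have hlin : HasDerivAt (fun τ : ℝ => -(2 * M) * τ) (-(2 * M)) x := by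
        simpa using (hasDerivAt_id x).const_mul (-(2 * M))
      simpa [mul_comm] using hlin.exp
    have := ((hFx.mul hFx).mul hexp)
    have this : HasDerivAt h ((F' x * F x + F x * F' x) * Real.exp (-(2 * M) * x) + F x * F x * (Real.exp (-(2 * M) * x) * -(2 * M))) x := this
    convert this using 1
    ring
  have hanti : AntitoneOn h (Set.Icc τ₀ m) := by
    apply antitoneOn_of_deriv_nonpos (convex_Icc _ _) hcont
    · rw [interior_Icc]
      exact fun x hx => (hderiv x hx).differentiableAt.differentiableWithinAt
    · rw [interior_Icc]
      intro x hx
      rw [(hderiv x hx).deriv]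
      have hx' : x ∈ Set.Ioo τ₀ e := ⟨hx.1, lt_trans hx.2 hm2⟩
      obtain ⟨hFne, hxI, hμb⟩ := hsub hx'
      rw [hode x hxI hFne]
      have hμx := abs_lt.mp hμb
      have hMpos : 0 < μ x + M := by linarith [hμx.1]
      have hexp := (Real.exp_pos (-(2 * M) * x)).le
      have hkey : (-(μ x * F x) * F x + F x * -(μ x * F x) + F x * F x * (-(2 * M))) * Real.exp (-(2 * M) * x)
          = -(2 * ((μ x + M) * (F x * F x) * Real.exp (-(2 * M) * x))) := by ring
      rw [hkey]
      have : 0 ≤ (μ x + M) * (F x * F x) * Real.exp (-(2 * M) * x) :=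
        mul_nonneg (mul_nonneg hMpos.le (mul_self_nonneg _)) hexp
      linarith
  have hfin : h m ≤ h τ₀ :=
    hanti (Set.left_mem_Icc.mpr hm1.le) (Set.right_mem_Icc.mpr hm1.le) hm1.le
  have hhτ₀ : h τ₀ = 0 := by simp [hdefh, h0]
  have hFm : F m ≠ 0 := (hsub ⟨hm1, hm2⟩).1
  have hhm : 0 < h m :=
    mul_pos (mul_self_pos.mpr hFm) (Real.exp_pos _)
  linarith [hfin, hhm, hhτ₀.symm ▸ hfin]




/-- in Fateev's reduction, the equations `u' = −(u+2d)²`, `(uc)' = 0`,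
`(ab)' = 0` together with the integrability conditions imply the remaining component ODEs
of the Ricci flow system. Here `v = u + 2d`. -/
theorem stmt_10 (s t : ℝ) (u a b c d a' b' c' d' : ℝ → ℝ)
    (hupos : ∀ τ ∈ Set.Ioo s t, 0 < u τ)
    (hapos : ∀ τ ∈ Set.Ioo s t, 0 < a τ)
    (hbpos : ∀ τ ∈ Set.Ioo s t, 0 < b τ)
    (hdneg : ∀ τ ∈ Set.Ioo s t, d τ < 0)
    (hic1 : ∀ τ ∈ Set.Ioo s t, (u τ + d τ) ^ 2 = (a τ) ^ 2 + (c τ) ^ 2)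
    (hic2 : ∀ τ ∈ Set.Ioo s t, (d τ) ^ 2 = (b τ) ^ 2 + (c τ) ^ 2)
    (hu : ∀ τ ∈ Set.Ioo s t, HasDerivAt u (-(u τ + 2 * d τ) ^ 2) τ)
    (hda : ∀ τ ∈ Set.Ioo s t, HasDerivAt a (a' τ) τ)
    (hdb : ∀ τ ∈ Set.Ioo s t, HasDerivAt b (b' τ) τ)
    (hdc : ∀ τ ∈ Set.Ioo s t, HasDerivAt c (c' τ) τ)
    (hdd : ∀ τ ∈ Set.Ioo s t, HasDerivAt d (d' τ) τ)
    (huc : ∀ τ ∈ Set.Ioo s t, HasDerivAt (fun σ => u σ * c σ) 0 τ)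
    (hab : ∀ τ ∈ Set.Ioo s t, HasDerivAt (fun σ => a σ * b σ) 0 τ) :
    ∀ τ ∈ Set.Ioo s t,
      (a τ) ^ 2 - (b τ) ^ 2 = u τ * (u τ + 2 * d τ) ∧
      u τ * a' τ = -(a τ) * ((a τ) ^ 2 - (b τ) ^ 2) ∧
      u τ * b' τ = b τ * ((a τ) ^ 2 - (b τ) ^ 2) ∧
      u τ * (-(u τ + 2 * d τ) ^ 2 + 2 * d' τ) =
        (u τ + 2 * d τ) ^ 3 - 2 * (u τ + 2 * d τ) * ((a τ) ^ 2 + (b τ) ^ 2) ∧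
      u τ * d' τ = (u τ + 2 * d τ) ^ 2 * d τ - 2 * (u τ + 2 * d τ) * (b τ) ^ 2 := by
  -- the algebraic identity a² - b² = u(u+2d)
  have alg1 : ∀ τ ∈ Set.Ioo s t, (a τ) ^ 2 - (b τ) ^ 2 = u τ * (u τ + 2 * d τ) := by
    intro τ hτ
    linear_combination (hic2 τ hτ) - (hic1 τ hτ)
  -- derivative relation for c from (uc)' = 0
  have hec : ∀ τ ∈ Set.Ioo s t, u τ * c' τ = (u τ + 2 * d τ) ^ 2 * c τ := by
    intro τ hτ
    have h := ((hu τ hτ).mul (hdc τ hτ)).unique (huc τ hτ)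
    linear_combination h
  -- derivative relation from (ab)' = 0
  have heab : ∀ τ ∈ Set.Ioo s t, a' τ * b τ + a τ * b' τ = 0 := by
    intro τ hτ
    exact ((hda τ hτ).mul (hdb τ hτ)).unique (hab τ hτ)
  -- differentiated integrability condition 1
  have he1 : ∀ τ ∈ Set.Ioo s t,
      2 * (u τ + d τ) * (-(u τ + 2 * d τ) ^ 2 + d' τ)
        - (2 * a τ * a' τ + 2 * c τ * c' τ) = 0 := by
    intro τ hτ
    have hadd := (hu τ hτ).add (hdd τ hτ)
    have hlhs := (hadd.mul hadd).sub (((hda τ hτ).mul (hda τ hτ)).add ((hdc τ hτ).mul (hdc τ hτ)))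
    have hzero : HasDerivAt
        (fun σ => (u σ + d σ) * (u σ + d σ) - (a σ * a σ + c σ * c σ)) 0 τ := by
      apply (hasDerivAt_const τ (0 : ℝ)).congr_of_eventuallyEq
      filter_upwards [Ioo_mem_nhds hτ.1 hτ.2] with x hx
      have := hic1 x hx
      nlinarith [this]
    have h := hlhs.unique hzero
    simp only [Pi.add_apply] at h
    linear_combination h
  -- differentiated integrability condition 2
  have he2 : ∀ τ ∈ Set.Ioo s t,
      2 * d τ * d' τ - (2 * b τ * b' τ + 2 * c τ * c' τ) = 0 := by
    intro τ hτ
    have hlhs := ((hdd τ hτ).mul (hdd τ hτ)).sub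
      (((hdb τ hτ).mul (hdb τ hτ)).add ((hdc τ hτ).mul (hdc τ hτ)))
    have hzero : HasDerivAt (fun σ => d σ * d σ - (b σ * b σ + c σ * c σ)) 0 τ := by
      apply (hasDerivAt_const τ (0 : ℝ)).congr_of_eventuallyEq
      filter_upwards [Ioo_mem_nhds hτ.1 hτ.2] with x hx
      have := hic2 x hx
      nlinarith [this]
    have h := hlhs.unique hzero
    linear_combination h
  -- nondegeneracy: u d + b² ≠ 0
  have hne : ∀ τ ∈ Set.Ioo s t, u τ * d τ + (b τ) ^ 2 ≠ 0 := by
    intro τ hτ h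
    have hu0 := hupos τ hτ
    have ha0 := hapos τ hτ
    have hd0 := hdneg τ hτ
    have p1 := hic1 τ hτ
    have p2 := hic2 τ hτ
    have h5 : (d τ) ^ 2 + u τ * d τ ≥ 0 := by nlinarith [sq_nonneg (c τ)]
    have h8 : u τ + d τ ≤ 0 := by
      by_contra hc
      push_neg at hc
      nlinarith [mul_neg_of_neg_of_pos hd0 hc]
    have h7 : (a τ) ^ 2 = u τ ^ 2 + u τ * d τ := by
      linear_combination (-1 : ℝ) * p1 + p2 + h
    nlinarith [mul_nonneg hu0.le (neg_nonneg.mpr h8), mul_pos ha0 ha0]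
  -- the key pointwise consequences when u + 2d ≠ 0
  have key : ∀ τ ∈ Set.Ioo s t, u τ + 2 * d τ ≠ 0 →
      a' τ = -(a τ) * (u τ + 2 * d τ) ∧ b' τ = b τ * (u τ + 2 * d τ) ∧
      u τ * d' τ = (u τ + 2 * d τ) ^ 2 * d τ - 2 * (u τ + 2 * d τ) * (b τ) ^ 2 := by
    intro τ hτ hv
    have hu0 := (hupos τ hτ).ne'
    have ha0 := (hapos τ hτ).ne'
    have hd0 := (hdneg τ hτ).ne
    have p1 := hic1 τ hτ
    have p2 := hic2 τ hτ
    have e1 := he1 τ hτ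
    have e2 := he2 τ hτ
    have ec := hec τ hτ
    have eab := heab τ hτ
    have h2 : (u τ * d τ + (b τ) ^ 2) *
        (u τ * ((u τ + 2 * d τ) * (a' τ + a τ * (u τ + 2 * d τ)))) = 0 := by
      linear_combination (-(a τ * d τ * u τ) / 2) * e1 + ((u τ + d τ) * a τ * u τ / 2) * e2
        + (a τ * c τ * u τ) * ec + ((u τ + d τ) * u τ * b τ) * eab
        + (u τ * a' τ * d τ) * p1
        + (-(a τ * u τ * (u τ + 2 * d τ) ^ 2) - u τ * a' τ * d τ) * p2
    have h4 : a' τ + a τ * (u τ + 2 * d τ) = 0 := by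
      rcases mul_eq_zero.mp h2 with h | h
      · exact absurd h (hne τ hτ)
      rcases mul_eq_zero.mp h with h | h
      · exact absurd h hu0
      rcases mul_eq_zero.mp h with h | h
      · exact absurd h hv
      exact h
    have ha' : a' τ = -(a τ) * (u τ + 2 * d τ) := by linarith
    have hb' : b' τ = b τ * (u τ + 2 * d τ) := by
      have hgoal : a τ * b' τ = a τ * (b τ * (u τ + 2 * d τ)) := by
        linear_combination eab + (-(b τ)) * h4
      exact mul_left_cancel₀ ha0 hgoal
    refine ⟨ha', hb', ?_⟩
    have hgoal : d τ * (u τ * d' τ) =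
        d τ * ((u τ + 2 * d τ) ^ 2 * d τ - 2 * (u τ + 2 * d τ) * (b τ) ^ 2) := by
      linear_combination (u τ / 2) * e2 + c τ * ec + u τ * b τ * hb'
        + (-(u τ + 2 * d τ) ^ 2) * p2
    exact mul_left_cancel₀ hd0 hgoal
  -- main proof
  intro τ hτ
  have hu0 := hupos τ hτ
  refine ⟨alg1 τ hτ, ?_⟩
  by_cases hv : u τ + 2 * d τ = 0
  · -- degenerate case: use the no-isolated-zero argument
    have hFd : ∀ σ ∈ Set.Ioo s t,
        HasDerivAt (fun x => a x * a x - b x * b x)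
          (a' σ * a σ + a σ * a' σ - (b' σ * b σ + b σ * b' σ)) σ := by
      intro σ hσ
      exact ((hda σ hσ).mul (hda σ hσ)).sub ((hdb σ hσ).mul (hdb σ hσ))
    have hμc : ContinuousOn (fun σ => 2 * (a σ ^ 2 + b σ ^ 2) / u σ) (Set.Ioo s t) := by
      have hca : ContinuousOn a (Set.Ioo s t) := fun x hx =>
        (hda x hx).continuousAt.continuousWithinAt
      have hcb : ContinuousOn b (Set.Ioo s t) := fun x hx =>
        (hdb x hx).continuousAt.continuousWithinAt
      have hcu : ContinuousOn u (Set.Ioo s t) := fun x hx =>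
        (hu x hx).continuousAt.continuousWithinAt
      exact (continuousOn_const.mul ((hca.pow 2).add (hcb.pow 2))).div hcu
        (fun x hx => (hupos x hx).ne')
    have hode : ∀ σ ∈ Set.Ioo s t, (fun x => a x * a x - b x * b x) σ ≠ 0 →
        a' σ * a σ + a σ * a' σ - (b' σ * b σ + b σ * b' σ) =
          -((2 * (a σ ^ 2 + b σ ^ 2) / u σ) * (a σ * a σ - b σ * b σ)) := by
      intro σ hσ hF
      simp only at hF
      have hvσ : u σ + 2 * d σ ≠ 0 := by
        intro h
        apply hF
        have := alg1 σ hσ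
        rw [h] at this
        nlinarith [this]
      obtain ⟨ha', hb', -⟩ := key σ hσ hvσ
      have huσ := (hupos σ hσ).ne'
      rw [ha', hb']
      have halg := alg1 σ hσ
      field_simp
      nlinarith [halg]
    have hF0 : (fun x => a x * a x - b x * b x) τ = 0 := by
      have := alg1 τ hτ
      rw [hv] at this
      simp only
      nlinarith [this]
    have hFF := aux_no_isolated hFd hμc hode hτ hF0
    -- now derive a' = b' = d' = 0
    have hab2 : a τ = b τ := by
      have h1 : (a τ - b τ) * (a τ + b τ) = 0 := by
        have := alg1 τ hτ
        rw [hv] at this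
        nlinarith [this]
      rcases mul_eq_zero.mp h1 with h | h
      · linarith
      · nlinarith [hapos τ hτ, hbpos τ hτ]
    have ha0 := (hapos τ hτ).ne'
    have ha'0 : a' τ = 0 := by
      have e4 := heab τ hτ
      -- a'(b) + a b' = 0 and 2aa' - 2bb' = 0 with a = b
      have h1 : a τ * (a' τ + b' τ) = 0 := by
        rw [hab2] at e4 ⊢
        linear_combination e4
      have h2 : a τ * (a' τ - b' τ) = 0 := by
        rw [hab2] at hFF ⊢
        linear_combination hFF / 2
      have h1' := (mul_eq_zero.mp h1).resolve_left (by rw [hab2]; exact (hbpos τ hτ).ne')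
      have h2' := (mul_eq_zero.mp h2).resolve_left (by rw [hab2]; exact (hbpos τ hτ).ne')
      linarith
    have hb'0 : b' τ = 0 := by
      have e4 := heab τ hτ
      rw [ha'0] at e4
      simp at e4
      rcases e4 with h | h
      · exact absurd h ha0
      · exact h
    have hc'0 : c' τ = 0 := by
      have := hec τ hτ
      rw [hv] at this
      simp at this
      rcases this with h | h
      · exact absurd h hu0.ne'
      · exact h
    have hd'0 : d' τ = 0 := by
      have e1 := he1 τ hτ
      rw [hv, ha'0, hc'0] at e1
      have hud : u τ + d τ ≠ 0 := by
        intro h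
        linarith [hdneg τ hτ, hv]
      have h1 : 2 * (u τ + d τ) * d' τ = 0 := by linarith [e1]
      rcases mul_eq_zero.mp h1 with h | h
      · rcases mul_eq_zero.mp h with h' | h'
        · norm_num at h'
        · exact absurd h' hud
      · exact h
    rw [hv, ha'0, hb'0, hd'0]
    have halg := alg1 τ hτ
    rw [hv] at halg
    exact ⟨by linear_combination (a τ) * halg, by linear_combination (-(b τ)) * halg,
      by norm_num, by norm_num⟩
  · obtain ⟨ha', hb', hd'⟩ := key τ hτ hv
    have halg := alg1 τ hτ
    refine ⟨?_, ?_, ?_, hd'⟩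
    · rw [ha']; linear_combination (a τ) * halg
    · rw [hb']; linear_combination (-(b τ)) * halg
    · linear_combination 2 * hd' + 2 * (u τ + 2 * d τ) * halg
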